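/- (Monkey saddle) The function f : ℝ² → ℝ defined by f(x,y) := x³ − 3xy² has a strict saddle point at (0,0). -/

import Mathlib

open Set Filter Topology

/-- `γ : [a, b] → D` is a regular path in `D`: it is continuous on `[a, b]`, maps `[a, b]`
into `D`, is differentiable on `(a, b)`, and its derivative is nonvanishing on `(a, b)`. -/
def IsRegularPath (D : Set (ℝ × ℝ)) (γ : ℝ → ℝ × ℝ) (a b : ℝ) : Prop :=
  a < b ∧ ContinuousOn γ (Set.Icc a b) ∧ Set.MapsTo γ (Set.Icc a b) D ∧
    ∀ t ∈ Set.Ioo a b, DifferentiableAt ℝ γ t ∧ deriv γ t ≠ 0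

/-- A function of one real variable has a strict local maximum at `t`. -/
def IsStrictLocalMax (g : ℝ → ℝ) (t : ℝ) : Prop :=
  ∀ᶠ s in 𝓝[≠] t, g s < g t

/-- A function of one real variable has a strict local minimum at `t`. -/
def IsStrictLocalMin (g : ℝ → ℝ) (t : ℝ) : Prop :=
  ∀ᶠ s in 𝓝[≠] t, g t < g s

/-- `f` has a saddle point at `p`: there are regular paths `γ₁, γ₂` in `D` passing through `p`
and intersecting transversally at `p` (their tangent vectors at `p` are not multiples of each
other) such that `f` has a local maximum at `p` along `γ₁` and a local minimum at `p`
along `γ₂`. -/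
def HasSaddleAt (D : Set (ℝ × ℝ)) (f : ℝ × ℝ → ℝ) (p : ℝ × ℝ) : Prop :=
  ∃ (a₁ b₁ a₂ b₂ t₁ t₂ : ℝ) (γ₁ γ₂ : ℝ → ℝ × ℝ),
    IsRegularPath D γ₁ a₁ b₁ ∧ IsRegularPath D γ₂ a₂ b₂ ∧
    t₁ ∈ Set.Ioo a₁ b₁ ∧ t₂ ∈ Set.Ioo a₂ b₂ ∧ γ₁ t₁ = p ∧ γ₂ t₂ = p ∧
    (∀ c : ℝ, deriv γ₁ t₁ ≠ c • deriv γ₂ t₂) ∧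
    (∀ c : ℝ, deriv γ₂ t₂ ≠ c • deriv γ₁ t₁) ∧
    IsLocalMax (f ∘ γ₁) t₁ ∧ IsLocalMin (f ∘ γ₂) t₂

/-- `f` has a strict saddle point at `p`: as for a saddle point, but with a strict local
maximum along `γ₁` and a strict local minimum along `γ₂`. -/
def HasStrictSaddleAt (D : Set (ℝ × ℝ)) (f : ℝ × ℝ → ℝ) (p : ℝ × ℝ) : Prop :=
  ∃ (a₁ b₁ a₂ b₂ t₁ t₂ : ℝ) (γ₁ γ₂ : ℝ → ℝ × ℝ),
    IsRegularPath D γ₁ a₁ b₁ ∧ IsRegularPath D γ₂ a₂ b₂ ∧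
    t₁ ∈ Set.Ioo a₁ b₁ ∧ t₂ ∈ Set.Ioo a₂ b₂ ∧ γ₁ t₁ = p ∧ γ₂ t₂ = p ∧
    (∀ c : ℝ, deriv γ₁ t₁ ≠ c • deriv γ₂ t₂) ∧
    (∀ c : ℝ, deriv γ₂ t₂ ≠ c • deriv γ₁ t₁) ∧
    IsStrictLocalMax (f ∘ γ₁) t₁ ∧ IsStrictLocalMin (f ∘ γ₂) t₂

/-- Monkey saddle: `f(x, y) = x³ - 3xy²` has a strict saddle point at the origin. -/
theorem monkey_saddle :
    HasStrictSaddleAt Set.univ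
      (fun q : ℝ × ℝ => q.1 ^ 3 - 3 * q.1 * q.2 ^ 2) (0, 0) := by
  set r := Real.sqrt 3 with hr
  have hr2 : r ^ 2 = 3 := Real.sq_sqrt (by norm_num)
  have hr0 : 0 ≤ r := Real.sqrt_nonneg 3
  have hrlt : r < 2 := by nlinarith
  have hrpos : 0 < r := by nlinarith
  set γ₁ : ℝ → ℝ × ℝ := fun t => (t ^ 2, t) with hγ₁
  set γ₂ : ℝ → ℝ × ℝ := fun t => (r * t + t ^ 2, t) with hγ₂
  have hd1 : ∀ t : ℝ, HasDerivAt γ₁ (2 * t, 1) t := by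
    intro t
    have h1 : HasDerivAt (fun t : ℝ => t ^ 2) (2 * t) t := by
      simpa using hasDerivAt_pow 2 t
    exact h1.prodMk (hasDerivAt_id t)
  have hd2 : ∀ t : ℝ, HasDerivAt γ₂ (r + 2 * t, 1) t := by
    intro t
    have h1 : HasDerivAt (fun t : ℝ => t ^ 2) (2 * t) t := by
      simpa using hasDerivAt_pow 2 t
    have h2 : HasDerivAt (fun t : ℝ => r * t) r t := by
      simpa using (hasDerivAt_id t).const_mul r
    exact (h2.add h1).prodMk (hasDerivAt_id t)
  have hD1 : deriv γ₁ 0 = (0, 1) := by simpa using (hd1 0).deriv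
  have hD2 : deriv γ₂ 0 = (r, 1) := by simpa using (hd2 0).deriv
  refine ⟨-1, 1, -1, 1, 0, 0, γ₁, γ₂, ?_, ?_, by norm_num, by norm_num, by simp [hγ₁],
    by simp [hγ₂], ?_, ?_, ?_, ?_⟩
  · refine ⟨by norm_num, ?_, fun x _ => trivial, fun t _ => ⟨(hd1 t).differentiableAt, ?_⟩⟩
    · exact Continuous.continuousOn (by fun_prop)
    · rw [(hd1 t).deriv]
      simp [Prod.ext_iff]
  · refine ⟨by norm_num, ?_, fun x _ => trivial, fun t _ => ⟨(hd2 t).differentiableAt, ?_⟩⟩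
    · exact Continuous.continuousOn (by fun_prop)
    · rw [(hd2 t).deriv]
      simp [Prod.ext_iff]
  · intro c h
    rw [hD1, hD2, Prod.ext_iff] at h
    simp only [Prod.smul_fst, Prod.smul_snd, smul_eq_mul] at h
    obtain ⟨h1, h2⟩ := h
    rw [mul_one] at h2
    subst h2
    nlinarith
  · intro c h
    rw [hD1, hD2, Prod.ext_iff] at h
    simp only [Prod.smul_fst, Prod.smul_snd, smul_eq_mul] at h
    obtain ⟨h1, h2⟩ := h
    rw [mul_zero] at h1
    nlinarith
  · have hmem : Set.Ioo (-1 : ℝ) 1 ∈ 𝓝[≠] (0 : ℝ) :=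
      nhdsWithin_le_nhds (Ioo_mem_nhds (by norm_num) (by norm_num))
    filter_upwards [hmem, self_mem_nhdsWithin] with s hs hs0
    simp only [Set.mem_compl_iff, Set.mem_singleton_iff] at hs0
    simp only [Function.comp_apply, hγ₁]
    have hs4 : 0 < s ^ 4 := by positivity
    have h1 : s ^ 2 < 1 := by nlinarith [hs.1, hs.2]
    nlinarith [hs4, h1]
  · have hmem : Set.Ioo (-1 : ℝ) 1 ∈ 𝓝[≠] (0 : ℝ) :=
      nhdsWithin_le_nhds (Ioo_mem_nhds (by norm_num) (by norm_num))
    filter_upwards [hmem, self_mem_nhdsWithin] with s hs hs0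
    simp only [Set.mem_compl_iff, Set.mem_singleton_iff] at hs0
    simp only [Function.comp_apply, hγ₂]
    have hs4 : 0 < s ^ 4 := by positivity
    have key : (r * s + s ^ 2) ^ 3 - 3 * (r * s + s ^ 2) * s ^ 2
        = s ^ 4 * (6 + 3 * r * s + s ^ 2) := by
      linear_combination (r * s ^ 3 + 3 * s ^ 4) * hr2
    have hrs : 0 ≤ r * (s + 1) := mul_nonneg hr0 (by linarith [hs.1])
    have hfpos : 0 < 6 + 3 * r * s + s ^ 2 := by nlinarith [sq_nonneg s]
    have hpos : (0:ℝ) < s ^ 4 * (6 + 3 * r * s + s ^ 2) := by positivity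
    rw [← key] at hpos
    norm_num
    linarith
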